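/- Let A be a commutative integral domain of characteristic zero, let d : A → A be a derivation, let R = {a ∈ A : d(a) = 0} be its subring of constants, and let z ∈ A satisfy d(z) = 1. Then z is transcendental over R; that is, for every nonzero polynomial p with all coefficients in R, the element Σ_k p_k z^k of A is nonzero. -/

import Mathlib

open Polynomial

/-- Let `A` be a commutative integral domain of characteristic zero,
`d` a derivation on `A`, `R = ker d` the subring of constants, and `z ∈ A` with `d z = 1`.
Then `z` is transcendental over `R`: no nonzero polynomial with constant coefficients
vanishes at `z`. -/
theorem primitive_of_one_is_transcendental_over_constants
    (A : Type*) [CommRing A] [IsDomain A] [CharZero A]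
    (d : A → A)
    (hadd : ∀ a b : A, d (a + b) = d a + d b)
    (hleib : ∀ a b : A, d (a * b) = a * d b + d a * b)
    (z : A) (hz : d z = 1) :
    ∀ p : Polynomial A, p ≠ 0 → (∀ k : ℕ, d (p.coeff k) = 0) →
      Polynomial.eval z p ≠ 0 := by
  have d0 : d 0 = 0 := by
    have h := hadd 0 0
    simp only [add_zero] at h
    exact (left_eq_add.mp h)
  have d1 : d 1 = 0 := by
    have h := hleib 1 1
    simp only [mul_one, one_mul] at h
    exact (left_eq_add.mp h)
  have dnat : ∀ n : ℕ, d (n : A) = 0 := by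
    intro n
    induction n with
    | zero => simpa using d0
    | succ n ih => push_cast; rw [hadd, ih, d1, add_zero]
  have dsum : ∀ (s : Finset ℕ) (f : ℕ → A),
      d (∑ i ∈ s, f i) = ∑ i ∈ s, d (f i) := by
    intro s f
    induction s using Finset.induction_on with
    | empty => simpa using d0
    | insert _ _ hx ih => rw [Finset.sum_insert hx, Finset.sum_insert hx, hadd, ih]
  have dpow : ∀ n : ℕ, d (z ^ n) = (n : A) * z ^ (n - 1) := by
    intro n
    induction n with
    | zero => simpa using d1
    | succ n ih =>
      rw [pow_succ, hleib, ih, hz]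
      cases n with
      | zero => simp
      | succ m =>
        push_cast
        ring
  have key : ∀ p : Polynomial A, (∀ k, d (p.coeff k) = 0) →
      d (p.eval z) = (derivative p).eval z := by
    intro p hp
    rw [Polynomial.eval_eq_sum_range, dsum]
    have hlt : (derivative p).natDegree < p.natDegree + 1 :=
      lt_of_le_of_lt (Polynomial.natDegree_derivative_le p)
        (Nat.lt_succ_of_le (Nat.sub_le _ _))
    rw [Polynomial.eval_eq_sum_range' hlt]
    have hterm : ∀ i : ℕ, d (p.coeff i * z ^ i) = p.coeff i * ((i : A) * z ^ (i - 1)) := by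
      intro i
      rw [hleib, hp i, dpow, zero_mul, add_zero]
    simp only [hterm, Polynomial.coeff_derivative]
    rw [Finset.sum_range_succ' (fun i => p.coeff i * ((i : A) * z ^ (i - 1)))]
    rw [Finset.sum_range_succ (fun i => p.coeff (i + 1) * ((i : A) + 1) * z ^ i)]
    have hc0 : p.coeff (p.natDegree + 1) = 0 :=
      Polynomial.coeff_eq_zero_of_natDegree_lt (Nat.lt_succ_self _)
    rw [hc0]
    simp only [Nat.cast_zero, zero_mul, mul_zero, add_zero, zero_mul]
    apply Finset.sum_congr rfl
    intro i _
    push_cast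
    ring
  have main : ∀ n (p : Polynomial A), p.natDegree ≤ n → p ≠ 0 →
      (∀ k, d (p.coeff k) = 0) → p.eval z ≠ 0 := by
    intro n
    induction n with
    | zero =>
      intro p hdeg hp _
      have hpc : p = C (p.coeff 0) := Polynomial.eq_C_of_natDegree_le_zero hdeg
      rw [hpc, Polynomial.eval_C]
      intro h
      exact hp (by rw [hpc, h, map_zero])
    | succ n ih =>
      intro p hdeg hp hc heval
      by_cases h0 : p.natDegree = 0
      · have hpc : p = C (p.coeff 0) := Polynomial.eq_C_of_natDegree_le_zero h0.le
        rw [hpc, Polynomial.eval_C] at heval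
        exact hp (by rw [hpc, heval, map_zero])
      · have hder : derivative p ≠ 0 := by
          intro h
          exact h0 (Polynomial.natDegree_eq_zero_of_derivative_eq_zero h)
        have hderc : ∀ k, d ((derivative p).coeff k) = 0 := by
          intro k
          rw [Polynomial.coeff_derivative, hleib, hc]
          have hcast : ((k : A) + 1) = ((k + 1 : ℕ) : A) := by push_cast; ring
          rw [hcast, dnat]
          ring
        have hderdeg : (derivative p).natDegree ≤ n := by
          have := Polynomial.natDegree_derivative_le p
          omega
        have hdeval : (derivative p).eval z = 0 := by
          rw [← key p hc, heval, d0]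
        exact ih (derivative p) hderdeg hder hderc hdeval
  intro p hp hc
  exact main p.natDegree p le_rfl hp hc
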